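/- For every q ≥ 2, n ≥ 1, y > 1, x > 0, with r = ⌊n/y⌋ and r' = n - r, the minimal covering density satisfies μ_q(n,R) ≤ x·V_q(n,R)/V_q(r',R) + e^{-x + V_q(r',R)/q^{r'}} · μ_q(r,R) · V_q(n,R)/V_q(r,R). -/

import Mathlib

/-- Size of a Hamming ball of radius `R` in `[q]^n`. -/
def V (q n R : ℕ) : ℕ := ∑ i ∈ Finset.range (R + 1), (q - 1) ^ i * n.choose i

/-- `K` is a covering code of `[q]^n` of radius `R`. -/
def IsCoveringCode (q n R : ℕ) (K : Finset (Fin n → Fin q)) : Prop :=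
  ∀ z : Fin n → Fin q, ∃ k ∈ K, hammingDist z k ≤ R

/-- Minimal density of a covering code of `[q]^n` of radius `R`. -/
noncomputable def mu (q n R : ℕ) : ℝ :=
  sInf {d : ℝ | ∃ K : Finset (Fin n → Fin q), IsCoveringCode q n R K ∧
    d = (K.card : ℝ) * (V q n R : ℝ) / (q : ℝ) ^ n}

lemma V_pos (q n R : ℕ) : 0 < V q n R := by
  have h0 : (0:ℕ) ∈ Finset.range (R+1) := by simp
  have := Finset.single_le_sum (f := fun i => (q-1)^i * n.choose i)
    (fun i _ => Nat.zero_le _) h0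
  simpa [V] using lt_of_lt_of_le (by simp) this

open Finset in
lemma ball_card (q n R : ℕ) (b : Fin n → Fin q) :
    (Finset.univ.filter fun w : Fin n → Fin q => hammingDist w b ≤ R).card = V q n R := by
  classical
  have hdist : ∀ w : Fin n → Fin q, hammingDist w b = (Finset.univ.filter fun j => w j ≠ b j).card := fun w => rfl
  set P : Finset (Finset (Fin n)) := Finset.univ.powerset.filter (fun s => s.card ≤ R) with hP
  have hmemP : ∀ s : Finset (Fin n), s ∈ P ↔ s.card ≤ R := by
    intro s; rw [hP, mem_filter, mem_powerset]
    exact ⟨fun h => h.2, fun h => ⟨subset_univ _, h⟩⟩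
  have hmap : ∀ w ∈ (Finset.univ.filter fun w : Fin n → Fin q => hammingDist w b ≤ R),
      (Finset.univ.filter fun j => w j ≠ b j) ∈ P := by
    intro w hw
    rw [hmemP]
    rw [mem_filter] at hw
    rw [← hdist w]; exact hw.2
  rw [Finset.card_eq_sum_card_fiberwise hmap]
  have hfib : ∀ s ∈ P,
      ((Finset.univ.filter fun w : Fin n → Fin q => hammingDist w b ≤ R).filter
        (fun w => (Finset.univ.filter fun j => w j ≠ b j) = s)).card = (q-1) ^ s.card := by
    intro s hs
    rw [hmemP] at hs
    have hset : ((Finset.univ.filter fun w : Fin n → Fin q => hammingDist w b ≤ R).filter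
        (fun w => (Finset.univ.filter fun j => w j ≠ b j) = s))
        = Fintype.piFinset (fun j => if j ∈ s then Finset.univ.erase (b j) else {b j}) := by
      ext w
      simp only [mem_filter, mem_univ, true_and, Fintype.mem_piFinset]
      constructor
      · rintro ⟨-, hws⟩ j
        by_cases hj : j ∈ s
        · simp only [hj, if_pos]
          rw [← hws] at hj
          simp only [mem_filter, mem_univ, true_and] at hj
          exact mem_erase.2 ⟨hj, mem_univ _⟩
        · simp only [hj, if_neg, not_false_iff, mem_singleton]
          rw [← hws] at hj
          simp only [mem_filter, mem_univ, true_and] at hj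
          exact not_not.1 hj
      · intro h
        have hseq : (Finset.univ.filter fun j => w j ≠ b j) = s := by
          ext j
          simp only [mem_filter, mem_univ, true_and]
          constructor
          · intro hne
            by_contra hj
            have := h j
            simp [hj] at this
            exact hne this
          · intro hj
            have := h j
            simp only [hj, if_pos] at this
            exact (mem_erase.1 this).1
        refine ⟨?_, hseq⟩
        rw [hdist w, hseq]
        exact hs
    rw [hset, Fintype.card_piFinset]
    have : ∀ j : Fin n, ((if j ∈ s then Finset.univ.erase (b j) else {b j}) : Finset (Fin q)).card
        = if j ∈ s then q - 1 else 1 := by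
      intro j
      by_cases hj : j ∈ s <;> simp [hj, Finset.card_erase_of_mem]
    rw [Finset.prod_congr rfl (fun j _ => this j)]
    rw [Finset.prod_ite_mem, Finset.univ_inter, Finset.prod_const]
  rw [Finset.sum_congr rfl hfib]
  have hmap2 : ∀ s ∈ P, s.card ∈ Finset.range (R+1) := by
    intro s hs; rw [hmemP] at hs; simp [Nat.lt_succ_iff, hs]
  rw [← Finset.sum_fiberwise_of_maps_to hmap2 (fun s => (q-1)^s.card)]
  unfold V
  refine Finset.sum_congr rfl ?_
  intro i hi
  rw [Finset.mem_range, Nat.lt_succ_iff] at hi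
  have hPi : P.filter (fun s => s.card = i) = Finset.powersetCard i Finset.univ := by
    ext s
    rw [mem_filter, hmemP, Finset.mem_powersetCard]
    constructor
    · rintro ⟨-, h⟩; exact ⟨subset_univ _, h⟩
    · rintro ⟨-, h⟩; exact ⟨h ▸ hi, h⟩
  rw [hPi]
  rw [Finset.sum_congr rfl (fun s hs => by rw [(Finset.mem_powersetCard.1 hs).2])]
  rw [Finset.sum_const, Finset.card_powersetCard, Finset.card_univ, Fintype.card_fin]
  rw [smul_eq_mul, mul_comm]

lemma muSet_finite (q n R : ℕ) : {d : ℝ | ∃ K : Finset (Fin n → Fin q), IsCoveringCode q n R K ∧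
    d = (K.card : ℝ) * (V q n R : ℝ) / (q : ℝ) ^ n}.Finite := by
  classical
  apply Set.Finite.subset (Set.finite_range
    (fun K : Finset (Fin n → Fin q) => (K.card : ℝ) * (V q n R : ℝ) / (q : ℝ) ^ n))
  rintro d ⟨K, -, rfl⟩
  exact ⟨K, rfl⟩

lemma muSet_nonempty (q n R : ℕ) : {d : ℝ | ∃ K : Finset (Fin n → Fin q), IsCoveringCode q n R K ∧
    d = (K.card : ℝ) * (V q n R : ℝ) / (q : ℝ) ^ n}.Nonempty := by
  classical
  refine ⟨_, Finset.univ, fun z => ⟨z, Finset.mem_univ _, by simp⟩, rfl⟩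

lemma mu_le (q n R : ℕ) (K : Finset (Fin n → Fin q)) (hK : IsCoveringCode q n R K) :
    mu q n R ≤ (K.card : ℝ) * (V q n R : ℝ) / (q : ℝ) ^ n :=
  csInf_le (muSet_finite q n R).bddBelow ⟨K, hK, rfl⟩

lemma mu_exists (q n R : ℕ) : ∃ K : Finset (Fin n → Fin q), IsCoveringCode q n R K ∧
    mu q n R = (K.card : ℝ) * (V q n R : ℝ) / (q : ℝ) ^ n :=
  (muSet_nonempty q n R).csInf_mem (muSet_finite q n R)

open Finset in
lemma dist_split {γ α β δ : Type*} [Fintype γ] [Fintype α] [Fintype β] [DecidableEq δ]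
    (e : γ ≃ α ⊕ β) (f g : γ → δ) :
    hammingDist f g = hammingDist (fun a => f (e.symm (Sum.inl a))) (fun a => g (e.symm (Sum.inl a)))
      + hammingDist (fun b => f (e.symm (Sum.inr b))) (fun b => g (e.symm (Sum.inr b))) := by
  classical
  simp only [hammingDist, Finset.card_filter]
  rw [← Equiv.sum_comp e.symm (fun i => if f i ≠ g i then 1 else 0), Fintype.sum_sum_type]

open Finset in
lemma averaging {W : Type*} [Fintype W] [DecidableEq W] [Nonempty W] (m : ℕ)
    (p : W → W → Prop) [∀ b t, Decidable (p b t)]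
    (v : ℕ) (hv : ∀ b : W, (Finset.univ.filter fun t => p b t).card = v) :
    ∃ T : Fin m → W,
      (Finset.univ.filter fun b : W => ∀ i, ¬ p b (T i)).card * (Fintype.card W) ^ m
        ≤ Fintype.card W * (Fintype.card W - v) ^ m := by
  classical
  set N := Fintype.card W
  have key : ∑ T : Fin m → W, (Finset.univ.filter fun b : W => ∀ i, ¬ p b (T i)).card
      = N * (N - v) ^ m := by
    have h1 : ∀ T : Fin m → W, (Finset.univ.filter fun b : W => ∀ i, ¬ p b (T i)).card
        = ∑ b : W, if (∀ i, ¬ p b (T i)) then 1 else 0 := fun T => Finset.card_filter _ _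
    simp only [h1]
    rw [Finset.sum_comm]
    have h2 : ∀ b : W, (∑ T : Fin m → W, if (∀ i, ¬ p b (T i)) then 1 else 0)
        = (N - v) ^ m := by
      intro b
      rw [← Finset.card_filter]
      have : (Finset.univ.filter fun T : Fin m → W => ∀ i, ¬ p b (T i))
          = Fintype.piFinset (fun _ : Fin m => Finset.univ.filter fun t => ¬ p b t) := by
        ext T; simp [Fintype.mem_piFinset]
      rw [this, Fintype.card_piFinset]
      have hcompl : (Finset.univ.filter fun t => ¬ p b t).card = N - v := by
        have := Finset.card_filter_add_card_filter_not
          (s := (Finset.univ : Finset W)) (p := fun t => p b t)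
        rw [hv b, Finset.card_univ] at this
        omega
      simp [hcompl]
    rw [Finset.sum_congr rfl (fun b _ => h2 b)]
    simp [Finset.card_univ, mul_comm, N]
  have havg : ∃ T : Fin m → W,
      (Fintype.card (Fin m → W)) * (Finset.univ.filter fun b : W => ∀ i, ¬ p b (T i)).card
        ≤ N * (N - v) ^ m := by
    by_contra hcon
    push_neg at hcon
    have : ∑ T : Fin m → W, (N * (N-v)^m + 1)
        ≤ ∑ T : Fin m → W, Fintype.card (Fin m → W) * (Finset.univ.filter fun b : W => ∀ i, ¬ p b (T i)).card := by
      apply Finset.sum_le_sum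
      intro T _
      exact hcon T
    rw [← Finset.mul_sum, key, Finset.sum_const, Finset.card_univ, smul_eq_mul] at this
    haveI : Nonempty (Fin m → W) := ⟨fun _ => Classical.arbitrary W⟩
    nlinarith [Fintype.card_pos (α := Fin m → W)]
  obtain ⟨T, hT⟩ := havg
  refine ⟨T, ?_⟩
  have : Fintype.card (Fin m → W) = N ^ m := by simp [N]
  rw [this] at hT
  linarith [hT]


lemma arith1 (qr m Vn N v x : ℝ) (hqr : 0 < qr) (hN : 0 < N) (hv : 0 < v)
    (hVn : 0 ≤ Vn) (hm : 0 ≤ m) (hmle : m ≤ x * N / v) :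
    qr * m * Vn / (qr * N) ≤ x * Vn / v := by
  rw [div_le_div_iff₀ (by positivity) hv]
  have h1 : qr * m * Vn * v ≤ qr * (x * N / v) * Vn * v := by
    gcongr
  calc qr * m * Vn * v ≤ qr * (x * N / v) * Vn * v := h1
    _ = x * Vn * (qr * N) := by field_simp

lemma arith2 (c B Vn Vr qr N E : ℝ) (hc : 0 ≤ c) (hVn : 0 ≤ Vn) (hVr : 0 < Vr)
    (hqr : 0 < qr) (hN : 0 < N) (hE : 0 ≤ E) (hB : B ≤ N * E) (hBnn : 0 ≤ B) :
    c * B * Vn / (qr * N) ≤ E * (c * Vr / qr) * Vn / Vr := by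
  have h1 : c * B * Vn / (qr * N) ≤ c * (N * E) * Vn / (qr * N) := by
    gcongr
  refine h1.trans (le_of_eq ?_)
  field_simp

set_option maxHeartbeats 1000000 in
/-- the key recursive density inequality. -/
theorem mu_recursive_bound (q n R : ℕ) (hq : 2 ≤ q) (hn : 1 ≤ n) (hR : 1 ≤ R)
    (y x : ℝ) (hy : 1 < y) (hx : 0 < x) (r : ℕ) (hr : r = ⌊(n : ℝ) / y⌋₊) (hr1 : 1 ≤ r) :
    mu q n R ≤ x * (V q n R : ℝ) / (V q (n - r) R : ℝ)
      + Real.exp (-x + (V q (n - r) R : ℝ) / (q : ℝ) ^ (n - r)) * mu q r R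
          * (V q n R : ℝ) / (V q r R : ℝ) := by
  classical
  have hq0 : 0 < q := by omega
  have hrn : r ≤ n := by
    rw [hr]
    calc ⌊(n : ℝ) / y⌋₊ ≤ ⌊(n : ℝ)⌋₊ :=
          Nat.floor_le_floor (div_le_self (by positivity) (le_of_lt hy))
      _ = n := Nat.floor_natCast n
  set r' := n - r with hr'
  have hsum : r + r' = n := by omega
  -- the coordinate-splitting equivalences
  let ε₀ : Fin n ≃ Fin r ⊕ Fin r' := (finCongr hsum.symm).trans finSumFinEquiv.symm
  let ε : (Fin n → Fin q) ≃ (Fin r → Fin q) × (Fin r' → Fin q) :=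
    (Equiv.arrowCongr ε₀ (Equiv.refl (Fin q))).trans
      (Equiv.sumArrowEquivProdArrow (Fin r) (Fin r') (Fin q))
  have hfst : ∀ f : Fin n → Fin q, (ε f).1 = fun a => f (ε₀.symm (Sum.inl a)) := fun f => rfl
  have hsnd : ∀ f : Fin n → Fin q, (ε f).2 = fun a => f (ε₀.symm (Sum.inr a)) := fun f => rfl
  have hdist : ∀ f g : Fin n → Fin q,
      hammingDist f g = hammingDist (ε f).1 (ε g).1 + hammingDist (ε f).2 (ε g).2 := by
    intro f g
    rw [hfst f, hfst g, hsnd f, hsnd g]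
    exact dist_split ε₀ f g
  -- parameters
  set v := V q r' R with hv
  set N := q ^ r' with hN
  have hv0 : 0 < v := V_pos q r' R
  have hN0 : 0 < N := pow_pos hq0 _  -- may need pow_pos
  have hball : ∀ b : Fin r' → Fin q,
      (Finset.univ.filter fun t => hammingDist b t ≤ R).card = v := by
    intro b
    rw [hv, ← ball_card q r' R b]
    congr 1
    apply Finset.filter_congr
    intro t _
    simp [hammingDist_comm]
  have hvN : v ≤ N := by
    rw [← hball (fun _ => ⟨0, hq0⟩)]
    calc _ ≤ (Finset.univ : Finset (Fin r' → Fin q)).card := Finset.card_filter_le _ _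
      _ = N := by simp [hN, Finset.card_univ]
  set m := ⌊x * (N : ℝ) / (v : ℝ)⌋₊ with hm
  haveI : Nonempty (Fin q) := ⟨⟨0, hq0⟩⟩
  haveI : Nonempty (Fin r' → Fin q) := ⟨fun _ => ⟨0, hq0⟩⟩
  obtain ⟨T, hT⟩ := averaging (W := Fin r' → Fin q) m
    (fun b t => hammingDist b t ≤ R) v hball
  have hcardW : Fintype.card (Fin r' → Fin q) = N := by simp [hN]
  rw [hcardW] at hT
  set Bset := (Finset.univ.filter fun b : Fin r' → Fin q => ∀ i, ¬ hammingDist b (T i) ≤ R)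
    with hB
  obtain ⟨K₀, hK₀cov, hK₀mu⟩ := mu_exists q r R
  -- the code
  set K : Finset (Fin n → Fin q) :=
    ((Finset.univ ×ˢ Finset.univ.image T) ∪ (K₀ ×ˢ Bset)).map ε.symm.toEmbedding with hK
  have hcov : IsCoveringCode q n R K := by
    intro z
    by_cases hb : ∃ i, hammingDist (ε z).2 (T i) ≤ R
    · obtain ⟨i, hi⟩ := hb
      refine ⟨ε.symm ((ε z).1, T i), ?_, ?_⟩
      · rw [hK, Finset.mem_map]
        refine ⟨((ε z).1, T i), ?_, rfl⟩
        apply Finset.mem_union_left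
        exact Finset.mem_product.2 ⟨Finset.mem_univ _, Finset.mem_image_of_mem T (Finset.mem_univ i)⟩
      · rw [hdist z (ε.symm ((ε z).1, T i))]
        rw [Equiv.apply_symm_apply]
        simpa using hi
    · push_neg at hb
      obtain ⟨k₀, hk₀, hd₀⟩ := hK₀cov (ε z).1
      refine ⟨ε.symm (k₀, (ε z).2), ?_, ?_⟩
      · rw [hK, Finset.mem_map]
        refine ⟨(k₀, (ε z).2), ?_, rfl⟩
        apply Finset.mem_union_right
        refine Finset.mem_product.2 ⟨hk₀, ?_⟩
        rw [hB, Finset.mem_filter]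
        exact ⟨Finset.mem_univ _, fun i => not_le.2 (hb i)⟩
      · rw [hdist z (ε.symm (k₀, (ε z).2))]
        rw [Equiv.apply_symm_apply]
        simpa using hd₀
  have hKcard : K.card ≤ q ^ r * m + K₀.card * Bset.card := by
    rw [hK, Finset.card_map]
    calc ((Finset.univ ×ˢ Finset.univ.image T) ∪ (K₀ ×ˢ Bset)).card
        ≤ (Finset.univ ×ˢ Finset.univ.image T).card + (K₀ ×ˢ Bset).card :=
          Finset.card_union_le _ _
      _ ≤ q ^ r * m + K₀.card * Bset.card := by
          rw [Finset.card_product, Finset.card_product]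
          gcongr
          · simp [Finset.card_univ]
          · calc (Finset.univ.image T).card ≤ (Finset.univ : Finset (Fin m)).card :=
                Finset.card_image_le
              _ = m := by simp
  -- real-number estimates
  have hmu := mu_le q n R K hcov
  have hVn0 : (0:ℝ) < (V q n R : ℝ) := by exact_mod_cast V_pos q n R
  have hVr0 : (0:ℝ) < (V q r R : ℝ) := by exact_mod_cast V_pos q r R
  have hv0' : (0:ℝ) < (v:ℝ) := by exact_mod_cast hv0
  have hN0' : (0:ℝ) < (N:ℝ) := by exact_mod_cast hN0
  have hq0' : (0:ℝ) < (q:ℝ) := by exact_mod_cast hq0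
  have hqn : (q:ℝ) ^ n = (q:ℝ) ^ r * (N:ℝ) := by
    rw [hN]
    push_cast
    rw [← pow_add, hsum]
  have hqn0 : (0:ℝ) < (q:ℝ) ^ n := by positivity
  -- bound on Bset.card
  have hBbound : (Bset.card : ℝ) ≤ (N:ℝ) * Real.exp (-x + (v:ℝ)/(N:ℝ)) := by
    have h1 : (Bset.card : ℝ) * (N:ℝ)^m ≤ (N:ℝ) * ((N:ℝ) - (v:ℝ))^m := by
      have := hT
      have hc : ((N - v : ℕ) : ℝ) = (N:ℝ) - (v:ℝ) := by
        push_cast [Nat.cast_sub hvN]; ring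
      exact_mod_cast hT
    have h2 : (Bset.card : ℝ) ≤ (N:ℝ) * (1 - (v:ℝ)/(N:ℝ))^m := by
      have hNm : (0:ℝ) < (N:ℝ)^m := by positivity
      rw [← mul_le_mul_iff_of_pos_right hNm]
      calc (Bset.card : ℝ) * (N:ℝ)^m ≤ (N:ℝ) * ((N:ℝ) - (v:ℝ))^m := h1
        _ = (N:ℝ) * (1 - (v:ℝ)/(N:ℝ))^m * (N:ℝ)^m := by
            rw [mul_assoc, ← mul_pow]
            congr 2
            field_simp
    refine h2.trans ?_
    gcongr
    calc (1 - (v:ℝ)/(N:ℝ))^m ≤ (Real.exp (-((v:ℝ)/(N:ℝ))))^m := by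
          gcongr
          · have : (v:ℝ)/(N:ℝ) ≤ 1 := by
              rw [div_le_one hN0']
              exact_mod_cast hvN
            linarith
          · have := Real.add_one_le_exp (-((v:ℝ)/(N:ℝ)))
            linarith
      _ = Real.exp (-((v:ℝ)/(N:ℝ)) * m) := by
          rw [← Real.exp_nat_mul]
          ring_nf
      _ ≤ Real.exp (-x + (v:ℝ)/(N:ℝ)) := by
          apply Real.exp_le_exp.2
          have hm1 : x * (N:ℝ) / (v:ℝ) < (m:ℝ) + 1 := Nat.lt_floor_add_one _
          have hxx : x ≤ ((m:ℝ)+1) * ((v:ℝ)/(N:ℝ)) := by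
            rw [div_lt_iff₀ hv0'] at hm1
            rw [mul_div_assoc'] at *
            rw [le_div_iff₀ hN0']
            nlinarith
          nlinarith
  -- assemble
  have hterm : mu q n R ≤ ((q:ℝ)^r * (m:ℝ) + (K₀.card:ℝ) * (Bset.card:ℝ)) * (V q n R : ℝ) / (q:ℝ)^n := by
    refine hmu.trans ?_
    gcongr
    calc (K.card : ℝ) ≤ ((q ^ r * m + K₀.card * Bset.card : ℕ) : ℝ) := by exact_mod_cast hKcard
      _ = (q:ℝ)^r * (m:ℝ) + (K₀.card:ℝ) * (Bset.card:ℝ) := by push_cast; ring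
  have hsplit : ((q:ℝ)^r * (m:ℝ) + (K₀.card:ℝ) * (Bset.card:ℝ)) * (V q n R : ℝ) / (q:ℝ)^n
      = (q:ℝ)^r * (m:ℝ) * (V q n R : ℝ) / (q:ℝ)^n
        + (K₀.card:ℝ) * (Bset.card:ℝ) * (V q n R : ℝ) / (q:ℝ)^n := by ring
  rw [hsplit] at hterm
  have hterm1 : (q:ℝ)^r * (m:ℝ) * (V q n R : ℝ) / (q:ℝ)^n ≤ x * (V q n R : ℝ) / (v:ℝ) := by
    have hmle : (m:ℝ) ≤ x * (N:ℝ) / (v:ℝ) := Nat.floor_le (by positivity)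
    rw [hqn]
    exact arith1 _ _ _ _ _ _ (by positivity) hN0' hv0' (le_of_lt hVn0) (Nat.cast_nonneg m) hmle
  have hterm2 : (K₀.card:ℝ) * (Bset.card:ℝ) * (V q n R : ℝ) / (q:ℝ)^n
      ≤ Real.exp (-x + (v:ℝ)/(N:ℝ)) * mu q r R * (V q n R : ℝ) / (V q r R : ℝ) := by
    have h2 := arith2 (K₀.card:ℝ) (Bset.card:ℝ) (V q n R : ℝ) (V q r R : ℝ)
      ((q:ℝ)^r) (N:ℝ) (Real.exp (-x + (v:ℝ)/(N:ℝ)))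
      (Nat.cast_nonneg _) (le_of_lt hVn0) hVr0 (by positivity) hN0'
      (Real.exp_nonneg _) hBbound (Nat.cast_nonneg _)
    rw [← hK₀mu] at h2
    rw [hqn]
    exact h2
  have hNcast : ((N:ℕ) : ℝ) = (q:ℝ)^r' := by rw [hN]; push_cast; rfl
  rw [hNcast] at hterm2
  calc mu q n R ≤ _ := hterm
    _ ≤ x * (V q n R : ℝ) / (v:ℝ)
        + Real.exp (-x + (v:ℝ)/(q:ℝ)^r') * mu q r R * (V q n R : ℝ) / (V q r R : ℝ) :=
      add_le_add hterm1 hterm2
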